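/- Let N = (0,0,1) and S = (0,0,−1) in ℝ³, and let x ∈ ℝ³ satisfy ‖x‖ < 1 and (x₁, x₂) ≠ (0,0). Then N, S, x are affinely independent (so there is a unique circle in ℝ³ passing through N, S and x, namely the circumcircle of the triangle N S x in the plane they span), and this circle intersects the open equatorial unit disk {y ∈ ℝ³ : y₃ = 0, y₁² + y₂² < 1} in exactly one point. -/

import Mathlib

set_option maxHeartbeats 1000000
open EuclideanGeometry

/-- The north pole `N = (0,0,1)` of the unit sphere in `ℝ³`. -/
noncomputable def ptN : EuclideanSpace ℝ (Fin 3) := !₂[0, 0, 1]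
/-- The south pole `S = (0,0,-1)` of the unit sphere in `ℝ³`. -/
noncomputable def ptS : EuclideanSpace ℝ (Fin 3) := !₂[0, 0, -1]

lemma dist3 (x y : EuclideanSpace ℝ (Fin 3)) :
    dist x y = Real.sqrt ((x 0 - y 0)^2 + (x 1 - y 1)^2 + (x 2 - y 2)^2) := by
  rw [EuclideanSpace.dist_eq]
  simp [Fin.sum_univ_three, Real.dist_eq, sq_abs]

lemma norm3 (x : EuclideanSpace ℝ (Fin 3)) : ‖x‖^2 = x 0^2 + x 1^2 + x 2^2 := by
  rw [EuclideanSpace.norm_eq, Real.sq_sqrt (by positivity)]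
  simp [Fin.sum_univ_three, sq_abs]

lemma comb_eq (x : EuclideanSpace ℝ (Fin 3)) (a b c : ℝ) :
    a • ptN + b • ptS + c • x = (!₂[c * x 0, c * x 1, a - b + c * x 2] : EuclideanSpace ℝ (Fin 3)) := by
  ext i
  fin_cases i <;>
    (simp [ptN, ptS, PiLp.add_apply, PiLp.smul_apply, smul_eq_mul]; try ring)

lemma comb_mem (x : EuclideanSpace ℝ (Fin 3)) (a b c : ℝ) (h : a + b + c = 1) :
    a • ptN + b • ptS + c • x ∈ affineSpan ℝ (Set.range ![ptN, ptS, x]) := by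
  have hw : ∑ i, (![a, b, c] : Fin 3 → ℝ) i = 1 := by
    simp [Fin.sum_univ_three]; linarith
  have := affineCombination_mem_affineSpan hw ![ptN, ptS, x]
  rwa [Finset.univ.affineCombination_eq_linear_combination _ _ hw,
    Fin.sum_univ_three] at this

lemma comb_mem' (x : EuclideanSpace ℝ (Fin 3)) (c : ℝ) :
    (!₂[c * x 0, c * x 1, 0] : EuclideanSpace ℝ (Fin 3)) ∈
      affineSpan ℝ (Set.range ![ptN, ptS, x]) := by
  have := comb_mem x ((1 - c - c * x 2)/2) ((1 - c + c * x 2)/2) c (by ring)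
  rwa [comb_eq, show ((1 - c - c * x 2)/2) - ((1 - c + c * x 2)/2) + c * x 2 = 0 by ring] at this

lemma aff_ind (x : EuclideanSpace ℝ (Fin 3)) (hx12 : ¬(x 0 = 0 ∧ x 1 = 0)) :
    AffineIndependent ℝ ![ptN, ptS, x] := by
  rw [affineIndependent_iff_not_collinear_set]
  intro hcol
  rw [collinear_iff_of_mem (Set.mem_insert _ _)] at hcol
  obtain ⟨v, hv⟩ := hcol
  obtain ⟨t2, ht2⟩ := hv ptS (by simp)
  obtain ⟨t3, ht3⟩ := hv x (by simp)
  simp only [vadd_eq_add] at ht2 ht3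
  have c2 : ∀ i, ptS i = t2 * v i + ptN i := fun i => by rw [ht2]; simp
  have c3 : ∀ i, x i = t3 * v i + ptN i := fun i => by rw [ht3]; simp
  have h22 := c2 2; have h20 := c2 0; have h21 := c2 1
  have h30 := c3 0; have h31 := c3 1
  simp [ptN, ptS] at h22 h20 h21 h30 h31
  have ht2ne : t2 ≠ 0 := by intro h; rw [h] at h22; norm_num at h22
  have hv0 : v 0 = 0 := h20.resolve_left ht2ne
  have hv1 : v 1 = 0 := h21.resolve_left ht2ne
  exact hx12 ⟨by rw [h30, hv0, mul_zero], by rw [h31, hv1, mul_zero]⟩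

/-- For a point `x` of the open unit ball of `ℝ³` not on the `x₃`-axis, the points
`N`, `S`, `x` are affinely independent, there is a unique circle through them
(a unique sphere in the plane they span whose center lies in that plane), and this
circle meets the open equatorial unit disk in exactly one point. -/
theorem stmt2 (x : EuclideanSpace ℝ (Fin 3)) (hx : ‖x‖ < 1)
    (hx12 : ¬(x 0 = 0 ∧ x 1 = 0)) :
    ∃ h : AffineIndependent ℝ ![ptN, ptS, x],
      (∃! s : EuclideanGeometry.Sphere (EuclideanSpace ℝ (Fin 3)),
        s.center ∈ affineSpan ℝ (Set.range ![ptN, ptS, x]) ∧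
          ∀ i : Fin 3, ![ptN, ptS, x] i ∈ s) ∧
      (∃! y : EuclideanSpace ℝ (Fin 3),
        (y ∈ (Affine.Simplex.mk ![ptN, ptS, x] h).circumsphere ∧
          y ∈ affineSpan ℝ (Set.range ![ptN, ptS, x])) ∧
        y 2 = 0 ∧ (y 0) ^ 2 + (y 1) ^ 2 < 1) := by
  have hind := aff_ind x hx12
  refine ⟨hind, ?_, ?_⟩
  · exact ⟨(Affine.Simplex.mk ![ptN, ptS, x] hind).circumsphere,
      ⟨(Affine.Simplex.mk ![ptN, ptS, x] hind).circumsphere_unique_dist_eq.1.1,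
       fun i => (Affine.Simplex.mk ![ptN, ptS, x] hind).circumsphere_unique_dist_eq.1.2 ⟨i, rfl⟩⟩,
      fun s hs => (Affine.Simplex.mk ![ptN, ptS, x] hind).circumsphere_unique_dist_eq.2 s
        ⟨hs.1, Set.range_subset_iff.2 hs.2⟩⟩
  · -- setup
    obtain ⟨ρ2, hρ2def⟩ : ∃ a : ℝ, a = x 0 ^ 2 + x 1 ^ 2 := ⟨_, rfl⟩
    have hρ2 : 0 < ρ2 := by
      rw [hρ2def]
      rcases (not_and_or.1 hx12) with h | h
      · have h0 : 0 < x 0 ^ 2 := by positivity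
        nlinarith [sq_nonneg (x 1)]
      · have h0 : 0 < x 1 ^ 2 := by positivity
        nlinarith [sq_nonneg (x 0)]
    have hxn : ‖x‖ ^ 2 = ρ2 + x 2 ^ 2 := by rw [norm3, hρ2def]
    have hx1 : ‖x‖ ^ 2 < 1 := by nlinarith [norm_nonneg x]
    obtain ⟨l, hldef⟩ : ∃ a : ℝ, a = (‖x‖ ^ 2 - 1) / (2 * ρ2) := ⟨_, rfl⟩
    have hl : ‖x‖ ^ 2 - 1 = 2 * l * ρ2 := by
      rw [hldef]; field_simp
    have hlneg : l < 0 := by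
      rw [hldef]; exact div_neg_of_neg_of_pos (by linarith) (by linarith)
    obtain ⟨c, hcdef⟩ : ∃ p : EuclideanSpace ℝ (Fin 3), p = !₂[l * x 0, l * x 1, 0] := ⟨_, rfl⟩
    have hc0 : c 0 = l * x 0 := by rw [hcdef]; rfl
    have hc1 : c 1 = l * x 1 := by rw [hcdef]; rfl
    have hc2 : c 2 = 0 := by rw [hcdef]; rfl
    obtain ⟨r, hrdef⟩ : ∃ a : ℝ, a = Real.sqrt (l ^ 2 * ρ2 + 1) := ⟨_, rfl⟩
    have hB : (0:ℝ) ≤ l ^ 2 * ρ2 + 1 := by positivity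
    have hr2 : r ^ 2 = l ^ 2 * ρ2 + 1 := by rw [hrdef]; exact Real.sq_sqrt hB
    have hcmem : c ∈ affineSpan ℝ (Set.range ![ptN, ptS, x]) := by
      rw [hcdef]; exact comb_mem' x l
    have hdN : dist ptN c = r := by
      rw [dist3, hrdef, hc0, hc1, hc2]
      congr 1
      simp [ptN]
      rw [hρ2def]; ring
    have hdS : dist ptS c = r := by
      rw [dist3, hrdef, hc0, hc1, hc2]
      congr 1
      simp [ptS]
      rw [hρ2def]; ring
    have hdx : dist x c = r := by
      rw [dist3, hrdef, hc0, hc1, hc2]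
      congr 1
      have h1 : (1 - l)^2 * ρ2 + x 2 ^ 2 = l ^ 2 * ρ2 + 1 := by linear_combination hl - hxn
      linear_combination h1 - (1 - l)^2 * hρ2def
    have hsph : (⟨c, r⟩ : Sphere (EuclideanSpace ℝ (Fin 3))) =
        (Affine.Simplex.mk ![ptN, ptS, x] hind).circumsphere := by
      refine (Affine.Simplex.mk ![ptN, ptS, x] hind).circumsphere_unique_dist_eq.2 _
        ⟨hcmem, ?_⟩
      rintro p ⟨i, rfl⟩
      fin_cases i
      · exact mem_sphere.2 hdN
      · exact mem_sphere.2 hdS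
      · exact mem_sphere.2 hdx
    -- the point y
    obtain ⟨q, hqdef⟩ : ∃ a : ℝ, a = Real.sqrt (l ^ 2 + 1 / ρ2) := ⟨_, rfl⟩
    have hq2 : q ^ 2 = l ^ 2 + 1 / ρ2 := by
      rw [hqdef]; exact Real.sq_sqrt (by positivity)
    have hqpos : 0 < q := by rw [hqdef]; exact Real.sqrt_pos.2 (by positivity)
    obtain ⟨μ, hμdef⟩ : ∃ a : ℝ, a = l + q := ⟨_, rfl⟩
    have hμpos : 0 < μ := by
      have h1 : l ^ 2 < q ^ 2 := by rw [hq2]; have := one_div_pos.2 hρ2; linarith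
      have habs : -l < q := by nlinarith [h1, hqpos, hlneg, mul_pos (neg_pos.2 hlneg) hqpos]
      rw [hμdef]; linarith
    have hq2' : ρ2 * (q ^ 2 - l ^ 2) = 1 := by rw [hq2]; field_simp; try ring
    have hkey : ρ2 * μ ^ 2 - (‖x‖ ^ 2 - 1) * μ = 1 := by
      rw [hl, hμdef]
      linear_combination hq2'
    have hμ2 : ρ2 * μ ^ 2 < 1 := by
      have h2 : (‖x‖ ^ 2 - 1) * μ < 0 := mul_neg_of_neg_of_pos (by linarith) hμpos
      nlinarith [hkey, h2]
    obtain ⟨y, hydef⟩ : ∃ p : EuclideanSpace ℝ (Fin 3), p = !₂[μ * x 0, μ * x 1, 0] := ⟨_, rfl⟩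
    have hy0 : y 0 = μ * x 0 := by rw [hydef]; rfl
    have hy1 : y 1 = μ * x 1 := by rw [hydef]; rfl
    have hy2 : y 2 = 0 := by rw [hydef]; rfl
    have hymem : y ∈ affineSpan ℝ (Set.range ![ptN, ptS, x]) := by
      rw [hydef]; exact comb_mem' x μ
    have hdy : dist y c = r := by
      rw [dist3, hrdef, hy0, hy1, hy2, hc0, hc1, hc2]
      congr 1
      have h1 : (μ - l) ^ 2 * ρ2 = l ^ 2 * ρ2 + 1 := by
        rw [hμdef]
        linear_combination hq2'
      linear_combination h1 - (μ - l) ^ 2 * hρ2def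
    have hysph : y ∈ (Affine.Simplex.mk ![ptN, ptS, x] hind).circumsphere := by
      rw [← hsph, mem_sphere]
      exact hdy
    refine ⟨y, ⟨⟨hysph, hymem⟩, hy2, ?_⟩, ?_⟩
    · rw [hy0, hy1]
      have h3 : (μ * x 0) ^ 2 + (μ * x 1) ^ 2 = ρ2 * μ ^ 2 := by rw [hρ2def]; ring
      linarith [h3, hμ2]
    -- uniqueness
    rintro y' ⟨⟨hy'sph, hy'mem⟩, hy'2, hy'disk⟩
    obtain ⟨w, hw, hwy⟩ := eq_affineCombination_of_mem_affineSpan_of_fintype hy'mem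
    rw [Finset.univ.affineCombination_eq_linear_combination _ _ hw, Fin.sum_univ_three] at hwy
    have hwsum : w 0 + w 1 + w 2 = 1 := by
      rw [Fin.sum_univ_three] at hw; exact hw
    have hy'eq : y' = (!₂[w 2 * x 0, w 2 * x 1, w 0 - w 1 + w 2 * x 2] :
        EuclideanSpace ℝ (Fin 3)) := by
      rw [hwy]; exact comb_eq x (w 0) (w 1) (w 2)
    have hy'0 : y' 0 = w 2 * x 0 := by rw [hy'eq]; rfl
    have hy'1 : y' 1 = w 2 * x 1 := by rw [hy'eq]; rfl
    have hy'c2 : y' 2 = w 0 - w 1 + w 2 * x 2 := by rw [hy'eq]; rfl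
    have hd : dist y' c = r := by
      have := mem_sphere.1 hy'sph
      rwa [← hsph] at this
    have hkey' : ρ2 * (w 2) ^ 2 - (‖x‖ ^ 2 - 1) * w 2 = 1 := by
      rw [dist3, hrdef] at hd
      have h1 : (y' 0 - c 0)^2 + (y' 1 - c 1)^2 + (y' 2 - c 2)^2 = l ^ 2 * ρ2 + 1 := by
        have hA : (0:ℝ) ≤ (y' 0 - c 0)^2 + (y' 1 - c 1)^2 + (y' 2 - c 2)^2 := by positivity
        exact (Real.sqrt_inj hA hB).1 hd
      rw [hy'0, hy'1, hy'2, hc0, hc1, hc2] at h1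
      rw [hl]
      linear_combination h1 + (w 2 - l) ^ 2 * hρ2def
    have hw2disk : ρ2 * (w 2) ^ 2 < 1 := by
      rw [hy'0, hy'1] at hy'disk
      have h3 : (w 2 * x 0) ^ 2 + (w 2 * x 1) ^ 2 = ρ2 * (w 2) ^ 2 := by rw [hρ2def]; ring
      linarith [hy'disk, h3]
    have hfac : (w 2 - μ) * (ρ2 * (w 2 + μ) - (‖x‖ ^ 2 - 1)) = 0 := by
      linear_combination hkey' - hkey
    have hw2 : w 2 = μ := by
      rcases mul_eq_zero.1 hfac with h | h
      · linarith
      · exfalso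
        have hprod : ρ2 * (w 2) * μ = -1 := by
          linear_combination μ * h - hkey
        have h1 : (ρ2 * μ ^ 2) * (ρ2 * (w 2) ^ 2) = 1 := by
          linear_combination (ρ2 * (w 2) * μ - 1) * hprod
        have ha' : 0 < ρ2 * μ ^ 2 := mul_pos hρ2 (pow_pos hμpos 2)
        have hb0 : 0 ≤ ρ2 * (w 2) ^ 2 := by positivity
        have hle : (ρ2 * μ ^ 2) * (ρ2 * (w 2) ^ 2) ≤ ρ2 * μ ^ 2 :=
          mul_le_of_le_one_right ha'.le hw2disk.le
        linarith [h1, hle, hμ2]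
    have h2 : w 0 - w 1 + w 2 * x 2 = 0 := by rw [← hy'c2]; exact hy'2
    have hw0 : w 0 = (1 - μ - μ * x 2)/2 := by rw [hw2] at hwsum h2; linarith
    have hw1 : w 1 = (1 - μ + μ * x 2)/2 := by rw [hw2] at hwsum h2; linarith
    rw [hy'eq, hw0, hw1, hw2, hydef]
    ext i
    fin_cases i <;> (simp; try ring)
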